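/- The integer Heisenberg group H_3(ℤ), consisting of 3×3 upper unitriangular matrices with integer entries, equipped with the word metric of the generating set {a,b,c}, where a, b, c are the unitriangular matrices whose single nonzero off-diagonal entry is a 1 in position (1,2), (2,3), (1,3) respectively, has the (2,0)-DTUT property. -/
import Mathlib


open Metric Set Function

namespace APC

variable {X Y : Type*}

/-- A family `𝒰` of subsets of a metric space is `r`-disjoint if any two distinct members
are at distance at least `r`. -/
def RDisjoint [MetricSpace X] (r : ℝ) (𝒰 : Set (Set X)) : Prop :=
  ∀ U ∈ 𝒰, ∀ V ∈ 𝒰, U ≠ V → ∀ x ∈ U, ∀ y ∈ V, r ≤ dist x y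

/-- A family `𝒰` is `R`-bounded if every member has diameter at most `R`. -/
def RBounded [MetricSpace X] (R : ℝ) (𝒰 : Set (Set X)) : Prop :=
  ∀ U ∈ 𝒰, ∀ x ∈ U, ∀ y ∈ U, dist x y ≤ R

/-- A family is uniformly bounded if it is `R`-bounded for some `R > 0`. -/
def UnifBounded [MetricSpace X] (𝒰 : Set (Set X)) : Prop :=
  ∃ R : ℝ, 0 < R ∧ RBounded R 𝒰

/-- `asdim X ≤ n`. -/
def AsdimLE (X : Type*) [MetricSpace X] (n : ℕ) : Prop :=
  ∀ r : ℝ, 0 < r → ∃ 𝒰 : Fin (n + 1) → Set (Set X),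
    (∀ i, UnifBounded (𝒰 i)) ∧ (∀ i, RDisjoint r (𝒰 i)) ∧ (⋃ i, ⋃₀ 𝒰 i) = Set.univ

/-- `X` has finite asymptotic dimension. -/
def HasFiniteAsdim (X : Type*) [MetricSpace X] : Prop := ∃ n : ℕ, AsdimLE X n

/-- Asymptotic property C. -/
def HasAPC (X : Type*) [MetricSpace X] : Prop :=
  ∀ R : ℕ → ℝ, (∀ i, 0 < R i) → StrictMono R →
    ∃ n : ℕ, ∃ 𝒰 : Fin (n + 1) → Set (Set X),
      (∀ i, UnifBounded (𝒰 i)) ∧ (∀ i : Fin (n + 1), RDisjoint (R i) (𝒰 i)) ∧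
      (⋃ i, ⋃₀ 𝒰 i) = Set.univ

/-- `M^a`, the derivative of a collection of finite nonempty subsets of `ℕ`. -/
def deriv (M : Set (Finset ℕ)) (a : ℕ) : Set (Finset ℕ) :=
  {τ | τ.Nonempty ∧ a ∉ τ ∧ insert a τ ∈ M}

/-- `OrdLE α M` means `Ord M ≤ α` in the sense of Radul: either `M = ∅`
(so that `Ord M = 0`), or `Ord M^a < α` for every `a : ℕ`.  Defined by
well-founded recursion on the ordinal `α`. -/
def OrdLE : Ordinal.{0} → Set (Finset ℕ) → Prop :=
  Ordinal.lt_wf.fix (C := fun _ => Set (Finset ℕ) → Prop)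
    (fun α IH M => M = ∅ ∨ ∀ a : ℕ, ∃ β : Ordinal.{0}, ∃ hβ : β < α, IH β hβ (deriv M a))

/-- The collection `A(X,d)` of finite nonempty subsets `σ ⊆ ℕ` such that there is no
covering of `X` by uniformly bounded families `𝒰ᵢ` (`i ∈ σ`), each `i`-disjoint. -/
def AClass (X : Type*) [MetricSpace X] : Set (Finset ℕ) :=
  {σ | σ.Nonempty ∧ ¬ ∃ 𝒰 : ℕ → Set (Set X),
      (∀ i ∈ σ, UnifBounded (𝒰 i)) ∧ (∀ i ∈ σ, RDisjoint (i : ℝ) (𝒰 i)) ∧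
      (⋃ i ∈ σ, ⋃₀ 𝒰 i) = Set.univ}

/-- `trasdim X ≤ α`. -/
def TrasdimLE (X : Type*) [MetricSpace X] (α : Ordinal.{0}) : Prop :=
  OrdLE α (AClass X)

/-- The `(m,n)`-DTUT property: disjointness of the `(m,n)`-tiling through uniform
translation. -/
def DTUT (X : Type*) [MetricSpace X] (m n : ℕ) : Prop :=
  ∃ F : Fin m → ℕ,
    ∀ h : ℕ+ → ℕ+, ∀ k : Fin (m + 1) → ℕ+, StrictMono k →
      ∃ C : (Fin m → ℕ+) → Fin (n + 1) → Set (Set X),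
      ∃ D : (Fin m → ℕ+) → (i : Fin m) → Fin (F i + 1) → Set (Set X),
        ∀ l : Fin m → ℕ+, (∀ r : Fin m, l r ≤ h (k r.succ)) →
          ((∀ j, UnifBounded (C l j)) ∧
           (∀ i s, UnifBounded (D l i s)) ∧
           (∀ j, RDisjoint ((k 0 : ℕ) : ℝ) (C l j)) ∧
           (∀ (i : Fin m) (s : Fin (F i + 1)), RDisjoint ((k i.succ : ℕ) : ℝ) (D l i s)) ∧
           ((⋃ j, ⋃₀ C l j) ∪ (⋃ i, ⋃ s, ⋃₀ D l i s) = Set.univ)) ∧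
          (∀ (i : Fin m) (s : Fin (F i + 1)),
            (∀ t : ℕ+, t ≤ h (k i.succ) →
              (⋃₀ D (Function.update l i t) i s).Nonempty) ∧
            (∀ t t' : ℕ+, t ≤ h (k i.succ) → t' ≤ h (k i.succ) → t ≠ t' →
              Disjoint (⋃₀ D (Function.update l i t) i s)
                (⋃₀ D (Function.update l i t') i s)) ∧
            RDisjoint ((k i.succ : ℕ) : ℝ)
              (⋃ t ∈ {t : ℕ+ | t ≤ h (k i.succ)}, D (Function.update l i t) i s))

/-- The word length of `g` with respect to the symmetrized generating set `S ∪ S⁻¹`. -/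
noncomputable def wordLength {G : Type*} [Group G] (S : Set G) (g : G) : ℕ :=
  sInf {n : ℕ | ∃ L : List G, (∀ x ∈ L, x ∈ S ∨ x⁻¹ ∈ S) ∧ L.prod = g ∧ L.length = n}

/-- A group is FC if every conjugacy class is finite. -/
def IsFCGroup (G : Type*) [Group G] : Prop :=
  ∀ x : G, Set.Finite {y : G | ∃ g : G, g * x * g⁻¹ = y}

/-- A metric on a countable discrete space is proper if every ball is finite. -/
def ProperMet (X : Type*) [MetricSpace X] : Prop :=
  ∀ (x : X) (R : ℝ), (Metric.closedBall x R).Finite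

/-- Left invariance of a metric on a group. -/
def LeftInvariant (G : Type*) [Group G] [MetricSpace G] : Prop :=
  ∀ g x y : G, dist (g * x) (g * y) = dist x y

/-- Bornologous maps. -/
def Bornologous [MetricSpace X] [MetricSpace Y] (f : X → Y) : Prop :=
  ∀ R : ℝ, 0 < R → ∃ P : ℝ, 0 < P ∧ ∀ x y : X, dist x y < R → dist (f x) (f y) < P

/-- Coarse embeddings. -/
def CoarseEmbedding [MetricSpace X] [MetricSpace Y] (f : X → Y) : Prop :=
  ∃ ρminus ρplus : ℝ → ℝ, Monotone ρminus ∧ Monotone ρplus ∧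
    Filter.Tendsto ρminus Filter.atTop Filter.atTop ∧
    (∀ x y : X, ρminus (dist x y) ≤ dist (f x) (f y) ∧ dist (f x) (f y) ≤ ρplus (dist x y))

/-- Coarse equivalences: coarse embeddings with coarsely dense image. -/
def CoarseEquiv [MetricSpace X] [MetricSpace Y] (f : X → Y) : Prop :=
  CoarseEmbedding f ∧ ∃ C : ℝ, 0 < C ∧ ∀ y : Y, ∃ x : X, dist y (f x) ≤ C

end APC

namespace APC

abbrev Mat3 := Matrix (Fin 3) (Fin 3) ℤ

/-- A 3×3 integer matrix is upper unitriangular if it has `1`s on the diagonal and `0`s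
below the diagonal. -/
def IsUnitriangular (A : Mat3) : Prop :=
  A 0 0 = 1 ∧ A 1 1 = 1 ∧ A 2 2 = 1 ∧ A 1 0 = 0 ∧ A 2 0 = 0 ∧ A 2 1 = 0

/-- The integer Heisenberg group `H₃(ℤ)`: the group of 3×3 upper unitriangular integer
matrices, realized as a subgroup of the units of the matrix ring. -/
def Heisenberg : Subgroup (Mat3)ˣ where
  carrier := {A | IsUnitriangular (A : Mat3)}
  one_mem' := by
    constructor <;> simp [Matrix.one_apply]
  mul_mem' := by
    intro A B hA hB
    obtain ⟨a00, a11, a22, a10, a20, a21⟩ := hA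
    obtain ⟨b00, b11, b22, b10, b20, b21⟩ := hB
    refine ⟨?_, ?_, ?_, ?_, ?_, ?_⟩ <;>
      simp [Units.val_mul, Matrix.mul_apply, Fin.sum_univ_three,
        a00, a11, a22, a10, a20, a21, b00, b11, b22, b10, b20, b21]
  inv_mem' := by
    intro A hA
    obtain ⟨a00, a11, a22, a10, a20, a21⟩ := hA
    set B : Mat3 := ((A⁻¹ : (Mat3)ˣ) : Mat3) with hB
    have h : B * (A : Mat3) = 1 := by
      rw [hB, ← Units.val_mul, inv_mul_cancel, Units.val_one]
    have e : ∀ i j : Fin 3, (B * (A : Mat3)) i j = (1 : Mat3) i j :=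
      fun i j => by rw [h]
    have h20 : B 2 0 = 0 := by
      have := e 2 0
      simpa [Matrix.mul_apply, Fin.sum_univ_three, a00, a10, a20, Matrix.one_apply] using this
    have h21 : B 2 1 = 0 := by
      have := e 2 1
      simpa [Matrix.mul_apply, Fin.sum_univ_three, a11, a10, a21, h20, Matrix.one_apply] using this
    have h22 : B 2 2 = 1 := by
      have := e 2 2
      simpa [Matrix.mul_apply, Fin.sum_univ_three, a22, h20, h21, Matrix.one_apply] using this
    have h10 : B 1 0 = 0 := by
      have := e 1 0
      simpa [Matrix.mul_apply, Fin.sum_univ_three, a00, a10, a20, Matrix.one_apply] using this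
    have h11 : B 1 1 = 1 := by
      have := e 1 1
      simpa [Matrix.mul_apply, Fin.sum_univ_three, a11, a21, h10, Matrix.one_apply] using this
    have h00 : B 0 0 = 1 := by
      have := e 0 0
      simpa [Matrix.mul_apply, Fin.sum_univ_three, a00, a10, a20, Matrix.one_apply] using this
    exact ⟨h00, h11, h22, h10, h20, h21⟩

end APC
namespace APC

/-- The generator `a` (a `1` in position (1,2)). -/
def aUnit : (Mat3)ˣ :=
  ⟨!![1, 1, 0; 0, 1, 0; 0, 0, 1], !![1, -1, 0; 0, 1, 0; 0, 0, 1], by decide, by decide⟩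

/-- The generator `b` (a `1` in position (2,3)). -/
def bUnit : (Mat3)ˣ :=
  ⟨!![1, 0, 0; 0, 1, 1; 0, 0, 1], !![1, 0, 0; 0, 1, -1; 0, 0, 1], by decide, by decide⟩

/-- The generator `c` (a `1` in position (1,3)). -/
def cUnit : (Mat3)ˣ :=
  ⟨!![1, 0, 1; 0, 1, 0; 0, 0, 1], !![1, 0, -1; 0, 1, 0; 0, 0, 1], by decide, by decide⟩

def aElt : Heisenberg := ⟨aUnit, by constructor <;> decide⟩
def bElt : Heisenberg := ⟨bUnit, by constructor <;> decide⟩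
def cElt : Heisenberg := ⟨cUnit, by constructor <;> decide⟩

end APC


-- Part 1: coordinates on the Heisenberg group
namespace APC

def mkMat (u v s : ℤ) : Mat3 := !![1, u, s; 0, 1, v; 0, 0, 1]

lemma mkMat_mul (u v s u' v' s' : ℤ) :
    mkMat u v s * mkMat u' v' s' = mkMat (u + u') (v + v') (s + s' + u * v') := by
  ext i j
  fin_cases i <;> fin_cases j <;>
    simp [mkMat, Matrix.mul_apply, Fin.sum_univ_three, Matrix.vecHead, Matrix.vecTail] <;> ring

lemma mkMat_zero : mkMat 0 0 0 = 1 := by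
  ext i j; fin_cases i <;> fin_cases j <;> simp [mkMat, Matrix.one_apply, Matrix.vecHead, Matrix.vecTail]

def mkUnit (u v s : ℤ) : (Mat3)ˣ :=
  ⟨mkMat u v s, mkMat (-u) (-v) (u * v - s), by
      rw [mkMat_mul]; rw [← mkMat_zero]; congr 1 <;> ring, by
      rw [mkMat_mul]; rw [← mkMat_zero]; congr 1 <;> ring⟩

def mk (u v s : ℤ) : Heisenberg :=
  ⟨mkUnit u v s, by
    refine ⟨?_, ?_, ?_, ?_, ?_, ?_⟩ <;> simp [mkUnit, mkMat, Matrix.vecHead, Matrix.vecTail]⟩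

lemma mk_mul (u v s u' v' s' : ℤ) :
    mk u v s * mk u' v' s' = mk (u + u') (v + v') (s + s' + u * v') := by
  apply Subtype.ext; apply Units.ext
  exact mkMat_mul u v s u' v' s'

lemma mk_zero : mk 0 0 0 = 1 := by
  apply Subtype.ext; apply Units.ext; exact mkMat_zero

lemma mk_inv (u v s : ℤ) : (mk u v s)⁻¹ = mk (-u) (-v) (u * v - s) := by
  apply inv_eq_of_mul_eq_one_right
  rw [mk_mul, ← mk_zero]; congr 1 <;> ring

def xc (g : Heisenberg) : ℤ := ((g : (Mat3)ˣ) : Mat3) 0 1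
def yc (g : Heisenberg) : ℤ := ((g : (Mat3)ˣ) : Mat3) 1 2
def wc (g : Heisenberg) : ℤ := ((g : (Mat3)ˣ) : Mat3) 0 2

@[simp] lemma xc_mk (u v s : ℤ) : xc (mk u v s) = u := by simp [xc, mk, mkUnit, mkMat]
@[simp] lemma yc_mk (u v s : ℤ) : yc (mk u v s) = v := by simp [yc, mk, mkUnit, mkMat]
@[simp] lemma wc_mk (u v s : ℤ) : wc (mk u v s) = s := by simp [wc, mk, mkUnit, mkMat]

lemma mk_coords (g : Heisenberg) : g = mk (xc g) (yc g) (wc g) := by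
  obtain ⟨h00, h11, h22, h10, h20, h21⟩ := g.2
  apply Subtype.ext; apply Units.ext
  ext i j
  fin_cases i <;> fin_cases j <;>
    simp [mk, mkUnit, mkMat, Matrix.vecHead, Matrix.vecTail, xc, yc, wc, h00, h11, h22, h10, h20, h21]

lemma aElt_eq : aElt = mk 1 0 0 := by
  apply Subtype.ext; apply Units.ext
  ext i j; fin_cases i <;> fin_cases j <;> rfl

lemma bElt_eq : bElt = mk 0 1 0 := by
  apply Subtype.ext; apply Units.ext
  ext i j; fin_cases i <;> fin_cases j <;> rfl

lemma cElt_eq : cElt = mk 0 0 1 := by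
  apply Subtype.ext; apply Units.ext
  ext i j; fin_cases i <;> fin_cases j <;> rfl

lemma xc_mul (g h : Heisenberg) : xc (g * h) = xc g + xc h := by
  rw [mk_coords g, mk_coords h, mk_mul]; simp

lemma yc_mul (g h : Heisenberg) : yc (g * h) = yc g + yc h := by
  rw [mk_coords g, mk_coords h, mk_mul]; simp

lemma wc_mul (g h : Heisenberg) : wc (g * h) = wc g + wc h + xc g * yc h := by
  rw [mk_coords g, mk_coords h, mk_mul]; simp

lemma pow_mk (u v s : ℤ) (huv : u * v = 0) : ∀ n : ℕ,
    (mk u v s) ^ n = mk (n * u) (n * v) (n * s)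
  | 0 => by simpa using mk_zero.symm
  | (n + 1) => by
    rw [pow_succ, pow_mk u v s huv n, mk_mul]
    push_cast
    congr 1 <;> try ring
    have : (n : ℤ) * u * v = 0 := by rw [mul_assoc, huv, mul_zero]
    nlinarith [this]

end APC
-- Part 2: word length estimates
namespace APC

def genS : Set Heisenberg := {aElt, bElt, cElt}

lemma coords_one : xc 1 = 0 ∧ yc 1 = 0 ∧ wc 1 = 0 := by
  rw [← mk_zero]; simp

lemma xc_inv (g : Heisenberg) : xc g⁻¹ = -xc g := by
  conv_lhs => rw [mk_coords g, mk_inv]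
  simp

lemma yc_inv (g : Heisenberg) : yc g⁻¹ = -yc g := by
  conv_lhs => rw [mk_coords g, mk_inv]
  simp

lemma wc_inv (g : Heisenberg) : wc g⁻¹ = xc g * yc g - wc g := by
  conv_lhs => rw [mk_coords g, mk_inv]
  simp

lemma gen_bound (g : Heisenberg) (hg : g ∈ genS ∨ g⁻¹ ∈ genS) :
    |xc g| ≤ 1 ∧ |yc g| ≤ 1 ∧ |wc g| ≤ 1 := by
  have key : ∀ x : Heisenberg, x ∈ genS → |xc x| ≤ 1 ∧ |yc x| ≤ 1 ∧ |wc x| ≤ 1 := by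
    intro x hx
    rcases hx with h | h | h <;> subst h <;>
      simp [aElt_eq, bElt_eq, cElt_eq]
  rcases hg with h | h
  · exact key g h
  · have hg' : g = aElt⁻¹ ∨ g = bElt⁻¹ ∨ g = cElt⁻¹ := by
      rcases h with h | h | h
      · left; rw [← h, inv_inv]
      · right; left; rw [← h, inv_inv]
      · right; right; rw [← h, inv_inv]
    rcases hg' with h' | h' | h' <;> rw [h'] <;>
      simp only [aElt_eq, bElt_eq, cElt_eq, mk_inv] <;> norm_num

lemma list_bound : ∀ L : List Heisenberg, (∀ g ∈ L, g ∈ genS ∨ g⁻¹ ∈ genS) →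
    |xc L.prod| ≤ (L.length : ℤ) ∧ |yc L.prod| ≤ (L.length : ℤ) ∧
      |wc L.prod| ≤ (L.length : ℤ) ^ 2
  | [], _ => by simp [coords_one.1, coords_one.2.1, coords_one.2.2]
  | (g :: L), hL => by
    have hg := gen_bound g (hL g (by simp))
    have ih := list_bound L (fun x hx => hL x (by simp [hx]))
    obtain ⟨i1, i2, i3⟩ := ih
    obtain ⟨g1, g2, g3⟩ := hg
    simp only [List.prod_cons, List.length_cons, xc_mul, yc_mul, wc_mul]
    push_cast
    refine ⟨?_, ?_, ?_⟩
    · calc |xc g + xc L.prod| ≤ |xc g| + |xc L.prod| := abs_add_le _ _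
        _ ≤ (L.length : ℤ) + 1 := by linarith
    · calc |yc g + yc L.prod| ≤ |yc g| + |yc L.prod| := abs_add_le _ _
        _ ≤ (L.length : ℤ) + 1 := by linarith
    · have h4 : |xc g * yc L.prod| ≤ (L.length : ℤ) := by
        rw [abs_mul]
        calc |xc g| * |yc L.prod| ≤ 1 * (L.length : ℤ) := by
              apply mul_le_mul g1 i2 (abs_nonneg _) zero_le_one
          _ = (L.length : ℤ) := one_mul _
      calc |wc g + wc L.prod + xc g * yc L.prod|
          ≤ |wc g + wc L.prod| + |xc g * yc L.prod| := abs_add_le _ _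
        _ ≤ |wc g| + |wc L.prod| + |xc g * yc L.prod| := by
              have := abs_add_le (wc g) (wc L.prod); linarith
        _ ≤ 1 + (L.length : ℤ)^2 + (L.length : ℤ) := by linarith
        _ ≤ ((L.length : ℤ) + 1)^2 := by nlinarith [Int.natCast_nonneg L.length]

lemma word_single (u v s : ℤ) (huv : u * v = 0) (g : Heisenberg) (hg : g ∈ genS)
    (hrep : g = mk u v s) (z : ℤ) :
    ∃ L : List Heisenberg, (∀ x ∈ L, x ∈ genS ∨ x⁻¹ ∈ genS) ∧
      L.prod = mk (z * u) (z * v) (z * s) ∧ L.length = z.natAbs := by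
  rcases le_or_gt 0 z with hz | hz
  · refine ⟨List.replicate z.natAbs g, ?_, ?_, by simp⟩
    · intro x hx; left; rwa [List.eq_of_mem_replicate hx]
    · rw [List.prod_replicate, hrep, pow_mk u v s huv]
      rw [Int.natAbs_of_nonneg hz]
  · refine ⟨List.replicate z.natAbs g⁻¹, ?_, ?_, by simp⟩
    · intro x hx; right; rw [List.eq_of_mem_replicate hx, inv_inv]; exact hg
    · have hginv : g⁻¹ = mk (-u) (-v) (-s) := by
        rw [hrep, mk_inv, huv]; ring_nf
      rw [List.prod_replicate, hginv, pow_mk _ _ _ (by rw [neg_mul_neg, huv])]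
      have hn : (z.natAbs : ℤ) = -z := by omega
      rw [hn]; ring_nf

lemma word_all (u v s : ℤ) :
    ∃ L : List Heisenberg, (∀ x ∈ L, x ∈ genS ∨ x⁻¹ ∈ genS) ∧
      L.prod = mk u v s ∧
      L.length = u.natAbs + v.natAbs + (s - u * v).natAbs := by
  obtain ⟨La, hLa, hpa, hla⟩ := word_single 1 0 0 (by ring) aElt (by left; rfl) aElt_eq u
  obtain ⟨Lb, hLb, hpb, hlb⟩ := word_single 0 1 0 (by ring) bElt (by right; left; rfl) bElt_eq v
  obtain ⟨Lc, hLc, hpc, hlc⟩ := word_single 0 0 1 (by ring) cElt (by right; right; rfl) cElt_eq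
    (s - u * v)
  refine ⟨La ++ Lb ++ Lc, ?_, ?_, ?_⟩
  · intro x hx
    simp only [List.mem_append] at hx
    rcases hx with (hx | hx) | hx
    exacts [hLa x hx, hLb x hx, hLc x hx]
  · rw [List.prod_append, List.prod_append, hpa, hpb, hpc, mk_mul, mk_mul]
    congr 1 <;> ring_nf
  · rw [List.length_append, List.length_append, hla, hlb, hlc]

lemma wl_le (u v s : ℤ) :
    wordLength genS (mk u v s) ≤ u.natAbs + v.natAbs + (s - u * v).natAbs := by
  obtain ⟨L, h1, h2, h3⟩ := word_all u v s
  exact Nat.sInf_le ⟨L, h1, h2, h3⟩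

lemma wl_spec (g : Heisenberg) : ∃ L : List Heisenberg,
    (∀ x ∈ L, x ∈ genS ∨ x⁻¹ ∈ genS) ∧ L.prod = g ∧ L.length = wordLength genS g := by
  have hne : {n : ℕ | ∃ L : List Heisenberg,
      (∀ x ∈ L, x ∈ genS ∨ x⁻¹ ∈ genS) ∧ L.prod = g ∧ L.length = n}.Nonempty := by
    obtain ⟨L, h1, h2, h3⟩ := word_all (xc g) (yc g) (wc g)
    exact ⟨L.length, L, h1, by rw [h2, ← mk_coords g], rfl⟩
  have := Nat.sInf_mem hne
  obtain ⟨L, h1, h2, h3⟩ := this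
  exact ⟨L, h1, h2, h3⟩

lemma coord_le_wl (g : Heisenberg) :
    |xc g| ≤ (wordLength genS g : ℤ) ∧ |yc g| ≤ (wordLength genS g : ℤ) ∧
      |wc g| ≤ (wordLength genS g : ℤ) ^ 2 := by
  obtain ⟨L, h1, h2, h3⟩ := wl_spec g
  have := list_bound L h1
  rw [h2, h3] at this
  exact this

lemma coords_quot (g h : Heisenberg) :
    xc (g⁻¹ * h) = xc h - xc g ∧ yc (g⁻¹ * h) = yc h - yc g ∧
      wc (g⁻¹ * h) = wc h - wc g - xc g * (yc h - yc g) := by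
  rw [xc_mul, yc_mul, wc_mul, xc_inv, yc_inv, wc_inv]
  refine ⟨by ring, by ring, by ring⟩


section DistLemmas

variable [MetricSpace Heisenberg]
  (hword : ∀ x y : Heisenberg,
    dist x y = (wordLength ({aElt, bElt, cElt} : Set Heisenberg) (x⁻¹ * y) : ℝ))

include hword

lemma hword' (g h : Heisenberg) :
    dist g h = (wordLength genS (g⁻¹ * h) : ℝ) := hword g h

lemma distA (g h : Heisenberg) : (|xc h - xc g| : ℝ) ≤ dist g h := by
  rw [hword' hword]
  have h1 := (coord_le_wl (g⁻¹ * h)).1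
  rw [(coords_quot g h).1] at h1
  exact_mod_cast h1

lemma distB (g h : Heisenberg) : (|yc h - yc g| : ℝ) ≤ dist g h := by
  rw [hword' hword]
  have h1 := (coord_le_wl (g⁻¹ * h)).2.1
  rw [(coords_quot g h).2.1] at h1
  exact_mod_cast h1

lemma distC (g h : Heisenberg) :
    (|wc h - wc g - xc g * (yc h - yc g)| : ℝ) ≤ (dist g h) ^ 2 := by
  rw [hword' hword]
  have h1 := (coord_le_wl (g⁻¹ * h)).2.2
  rw [(coords_quot g h).2.2] at h1
  exact_mod_cast h1

lemma distD (g h : Heisenberg) :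
    dist g h ≤ (|xc h - xc g| : ℝ) + (|yc h - yc g| : ℝ) +
      (|wc h - wc g - xc h * (yc h - yc g)| : ℝ) := by
  rw [hword' hword]
  obtain ⟨e1, e2, e3⟩ := coords_quot g h
  have hq : g⁻¹ * h = mk (xc h - xc g) (yc h - yc g)
      (wc h - wc g - xc g * (yc h - yc g)) := by
    rw [mk_coords (g⁻¹ * h), e1, e2, e3]
  have hle := wl_le (xc h - xc g) (yc h - yc g) (wc h - wc g - xc g * (yc h - yc g))
  rw [← hq] at hle
  have key : (wordLength genS (g⁻¹ * h) : ℝ) ≤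
      ((xc h - xc g).natAbs + (yc h - yc g).natAbs +
        (wc h - wc g - xc g * (yc h - yc g) - (xc h - xc g) * (yc h - yc g)).natAbs : ℕ) := by
    exact_mod_cast hle
  refine key.trans ?_
  have : wc h - wc g - xc g * (yc h - yc g) - (xc h - xc g) * (yc h - yc g) =
      wc h - wc g - xc h * (yc h - yc g) := by ring
  rw [this]
  push_cast [Nat.cast_natAbs]
  simp

end DistLemmas

end APC
-- Part 3a: interval combinatorics and box separation
namespace APC

lemma one_le_abs' {a : ℤ} (h : a ≠ 0) : 1 ≤ |a| := by
  rcases lt_or_gt_of_ne h with h1 | h1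
  · rw [abs_of_neg h1]; omega
  · rw [abs_of_pos h1]; omega

/-- Separation of wall positions `j*M + t*P` for `t ∈ [1,T]`, `M = (T+1)*P`. -/
lemma pos_sep {P T M j t j' t' : ℤ} (hP : 0 < P) (hM : M = (T + 1) * P)
    (ht1 : 1 ≤ t) (ht2 : t ≤ T) (ht1' : 1 ≤ t') (ht2' : t' ≤ T)
    (hne : ¬(j = j' ∧ t = t')) :
    P ≤ |(j * M + t * P) - (j' * M + t' * P)| := by
  rcases eq_or_ne j j' with rfl | hj
  · have ht : t ≠ t' := fun hh => hne ⟨rfl, hh⟩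
    have he : (j * M + t * P) - (j * M + t' * P) = (t - t') * P := by ring
    rw [he, abs_mul, abs_of_pos hP]
    have h1 : 1 ≤ |t - t'| := one_le_abs' (by omega)
    nlinarith
  · have he : (j * M + t * P) - (j' * M + t' * P) = (j - j') * M + (t - t') * P := by ring
    rw [he]
    have hMpos : 0 < M := by rw [hM]; nlinarith
    have h1 : 1 ≤ |j - j'| := one_le_abs' (by omega)
    have hA : M ≤ |(j - j') * M| := by rw [abs_mul, abs_of_pos hMpos]; nlinarith
    have hB2 : |(t - t') * P| ≤ (T - 1) * P := by
      rw [abs_mul, abs_of_pos hP]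
      have h2 : |t - t'| ≤ T - 1 := abs_le.mpr ⟨by omega, by omega⟩
      nlinarith
    have h3 : |(j - j') * M| - |(t - t') * P| ≤ |(j - j') * M + (t - t') * P| := by
      have h4 := abs_sub_abs_le_abs_sub ((j - j') * M) (-((t - t') * P))
      simp only [abs_neg, sub_neg_eq_add] at h4
      linarith
    have h5 : M - (T - 1) * P = 2 * P := by rw [hM]; ring
    linarith

/-- Points in two distinct walls (width `d`) are at least `P - d + 1` apart. -/
lemma wall_sep {P T M d j t j' t' x x' : ℤ} (hP : 0 < P) (hM : M = (T + 1) * P)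
    (hd : 0 < d) (hdP : d ≤ P)
    (ht1 : 1 ≤ t) (ht2 : t ≤ T) (ht1' : 1 ≤ t') (ht2' : t' ≤ T)
    (hne : ¬(j = j' ∧ t = t'))
    (hx1 : j * M + t * P ≤ x) (hx2 : x < j * M + t * P + d)
    (hx1' : j' * M + t' * P ≤ x') (hx2' : x' < j' * M + t' * P + d) :
    P - d + 1 ≤ |x - x'| := by
  have hpp := pos_sep hP hM ht1 ht2 ht1' ht2' hne
  rcases abs_cases ((j * M + t * P) - (j' * M + t' * P)) with ⟨he, _⟩ | ⟨he, _⟩ <;>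
    rw [he] at hpp <;> rcases abs_cases (x - x') with ⟨he2, _⟩ | ⟨he2, _⟩ <;>
    rw [he2] <;> linarith

/-- Points in two distinct tiles (complементary intervals, same `t`) are `d+1` apart. -/
lemma tile_sep {M S d x x' j j' : ℤ} (hM0 : 0 ≤ M) (hjj : j ≠ j')
    (hx1 : j * M + S + d ≤ x) (hx2 : x < (j + 1) * M + S)
    (hx1' : j' * M + S + d ≤ x') (hx2' : x' < (j' + 1) * M + S) :
    d + 1 ≤ |x - x'| := by
  rcases hjj.lt_or_gt with hlt | hlt
  · have h1 : (j + 1) * M ≤ j' * M := by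
      have : (j + 1 : ℤ) ≤ j' := by omega
      exact mul_le_mul_of_nonneg_right this hM0
    have : d + 1 ≤ x' - x := by linarith
    calc d + 1 ≤ x' - x := this
      _ ≤ |x' - x| := le_abs_self _
      _ = |x - x'| := abs_sub_comm _ _
  · have h1 : (j' + 1) * M ≤ j * M := by
      have : (j' + 1 : ℤ) ≤ j := by omega
      exact mul_le_mul_of_nonneg_right this hM0
    have : d + 1 ≤ x - x' := by linarith
    calc d + 1 ≤ x - x' := this
      _ ≤ |x - x'| := le_abs_self _

/-- Points in distinct same-parity blocks `[rN, rN+N)` are at least `N+1` apart. -/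
lemma blk_sep {N r r' x x' : ℤ} (hrr : r ≠ r') (hpar : r % 2 = r' % 2)
    (hx1 : r * N ≤ x) (hx2 : x < r * N + N)
    (hx1' : r' * N ≤ x') (hx2' : x' < r' * N + N) :
    N + 1 ≤ |x - x'| := by
  have hN : 0 < N := by linarith
  rcases (show r + 2 ≤ r' ∨ r' + 2 ≤ r by omega) with hle | hle
  · have h1 : (r + 2) * N ≤ r' * N := mul_le_mul_of_nonneg_right hle (le_of_lt hN)
    have h2 : (r + 2) * N = r * N + 2 * N := by ring
    have : N + 1 ≤ x' - x := by linarith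
    calc N + 1 ≤ x' - x := this
      _ ≤ |x' - x| := le_abs_self _
      _ = |x - x'| := abs_sub_comm _ _
  · have h1 : (r' + 2) * N ≤ r * N := mul_le_mul_of_nonneg_right hle (le_of_lt hN)
    have h2 : (r' + 2) * N = r' * N + 2 * N := by ring
    have : N + 1 ≤ x - x' := by linarith
    calc N + 1 ≤ x - x' := this
      _ ≤ |x - x'| := le_abs_self _

/-- A coordinate box in the Heisenberg group, with shear based at `u`. -/
def hbox (u v w a b c : ℤ) : Set Heisenberg :=
  {g | (u ≤ xc g ∧ xc g < u + a) ∧ (v ≤ yc g ∧ yc g < v + b) ∧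
    (w ≤ wc g - u * yc g ∧ wc g - u * yc g < w + c)}

lemma hbox_nonempty {u v w a b c : ℤ} (ha : 0 < a) (hb : 0 < b) (hc : 0 < c) :
    (hbox u v w a b c).Nonempty := by
  refine ⟨mk u v (w + u * v), ?_⟩
  simp only [hbox, Set.mem_setOf_eq, xc_mk, yc_mk, wc_mk]
  constructor
  · omega
  constructor
  · omega
  · constructor <;> [linarith; linarith]

section DistSection

variable [MetricSpace Heisenberg]
  (hword : ∀ x y : Heisenberg,
    dist x y = (wordLength ({aElt, bElt, cElt} : Set Heisenberg) (x⁻¹ * y) : ℝ))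

include hword

lemma dist_of_x {g h' : Heisenberg} (K : ℤ) (hK : K ≤ |xc h' - xc g|) :
    (K : ℝ) ≤ dist g h' := by
  have h1 := distA hword g h'
  have h2 : ((K : ℤ) : ℝ) ≤ ((|xc h' - xc g| : ℤ) : ℝ) := Int.cast_le.mpr hK
  rw [Int.cast_abs] at h2
  push_cast at h2 ⊢
  linarith

lemma dist_of_y {g h' : Heisenberg} (K : ℤ) (hK : K ≤ |yc h' - yc g|) :
    (K : ℝ) ≤ dist g h' := by
  have h1 := distB hword g h'
  have h2 : ((K : ℤ) : ℝ) ≤ ((|yc h' - yc g| : ℤ) : ℝ) := Int.cast_le.mpr hK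
  rw [Int.cast_abs] at h2
  push_cast at h2 ⊢
  linarith

lemma dist_of_psi {g h' : Heisenberg} (K S E u : ℤ) (hK : 0 ≤ K)
    (hS : |xc g - u| ≤ S) (hE : |yc h' - yc g| ≤ E)
    (hpsi : K ^ 2 + S * E ≤ |(wc h' - u * yc h') - (wc g - u * yc g)|) :
    (K : ℝ) ≤ dist g h' := by
  have key : K ^ 2 ≤ |wc h' - wc g - xc g * (yc h' - yc g)| := by
    have e : wc h' - wc g - xc g * (yc h' - yc g)
        = ((wc h' - u * yc h') - (wc g - u * yc g)) - (xc g - u) * (yc h' - yc g) := by ring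
    rw [e]
    have h1 := abs_sub_abs_le_abs_sub ((wc h' - u * yc h') - (wc g - u * yc g))
      ((xc g - u) * (yc h' - yc g))
    have h2 : |(xc g - u) * (yc h' - yc g)| ≤ S * E := by
      rw [abs_mul]
      exact mul_le_mul hS hE (abs_nonneg _) (le_trans (abs_nonneg _) hS)
    linarith
  have hd := distC hword g h'
  have h3 : ((K : ℝ)) ^ 2 ≤ (dist g h') ^ 2 := by
    have h4 : ((K ^ 2 : ℤ) : ℝ) ≤ ((|wc h' - wc g - xc g * (yc h' - yc g)| : ℤ) : ℝ) :=
      Int.cast_le.mpr key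
    rw [Int.cast_abs] at h4
    push_cast at h4 hd ⊢
    linarith
  by_contra hcon
  push_neg at hcon
  have h5 : dist g h' ^ 2 < (K : ℝ) ^ 2 :=
    pow_lt_pow_left₀ hcon dist_nonneg (by norm_num)
  linarith

lemma hbox_bound {u v w a b c : ℤ} (ha : 0 ≤ a) (hb : 0 ≤ b)
    {g h' : Heisenberg} (hg : g ∈ hbox u v w a b c) (hh : h' ∈ hbox u v w a b c) :
    dist g h' ≤ ((a + b + c + a * b : ℤ) : ℝ) := by
  obtain ⟨⟨g1, g2⟩, ⟨g3, g4⟩, ⟨g5, g6⟩⟩ := hg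
  obtain ⟨⟨p1, p2⟩, ⟨p3, p4⟩, ⟨p5, p6⟩⟩ := hh
  have e1 : |xc h' - xc g| ≤ a := abs_le.mpr ⟨by linarith, by linarith⟩
  have e2 : |yc h' - yc g| ≤ b := abs_le.mpr ⟨by linarith, by linarith⟩
  have e3 : |wc h' - wc g - xc h' * (yc h' - yc g)| ≤ c + a * b := by
    have e : wc h' - wc g - xc h' * (yc h' - yc g)
        = ((wc h' - u * yc h') - (wc g - u * yc g)) - (xc h' - u) * (yc h' - yc g) := by ring
    rw [e]
    have h1 := abs_sub ((wc h' - u * yc h') - (wc g - u * yc g))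
      ((xc h' - u) * (yc h' - yc g))
    have h2 : |(wc h' - u * yc h') - (wc g - u * yc g)| ≤ c :=
      abs_le.mpr ⟨by linarith, by linarith⟩
    have h3 : |(xc h' - u) * (yc h' - yc g)| ≤ a * b := by
      rw [abs_mul]
      have hxu : |xc h' - u| ≤ a := abs_le.mpr ⟨by linarith, by linarith⟩
      exact mul_le_mul hxu e2 (abs_nonneg _) ha
    calc |((wc h' - u * yc h') - (wc g - u * yc g)) - (xc h' - u) * (yc h' - yc g)|
        ≤ |(wc h' - u * yc h') - (wc g - u * yc g)| + |(xc h' - u) * (yc h' - yc g)| :=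
          abs_sub _ _
      _ ≤ c + a * b := by linarith
  have hD := distD hword g h'
  have c1 : (|xc h' - xc g| : ℝ) ≤ ((a : ℤ) : ℝ) := by exact_mod_cast e1
  have c2 : (|yc h' - yc g| : ℝ) ≤ ((b : ℤ) : ℝ) := by exact_mod_cast e2
  have c3 : (|wc h' - wc g - xc h' * (yc h' - yc g)| : ℝ) ≤ ((c + a * b : ℤ) : ℝ) := by
    exact_mod_cast e3
  push_cast at c1 c2 c3 hD ⊢
  linarith

end DistSection

end APC
-- Part 3b: the tiling pieces and their separation
namespace APC

def mx (B T1 : ℤ) : ℤ := (T1 + 1) * (2 * B)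
def bxv (B T1 : ℤ) : ℤ := mx B T1 - B
def my (B T2 : ℤ) : ℤ := (T2 + 1) * (2 * B)
def byv (B T2 : ℤ) : ℤ := my B T2 - B
def qx (B : ℤ) : ℤ := 2 * B ^ 2 + 1
def q1 (B T1 : ℤ) : ℤ := B ^ 2 + bxv B T1 * B + 1
def dps (B T1 T2 : ℤ) : ℤ := B ^ 2 + bxv B T1 * byv B T2 + 1
def pps (B T1 T2 : ℤ) : ℤ := dps B T1 T2 + q1 B T1
def mps (B T1 T2 : ℤ) : ℤ := (T2 + 1) * pps B T1 T2

section Pieces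

variable (B T1 T2 t1 t2 : ℤ)

def d0Set (j r q : ℤ) : Set Heisenberg :=
  hbox (j * mx B T1 + t1 * (2 * B)) (r * B) (q * qx B) B B (qx B)

def d1ySet (α m q : ℤ) : Set Heisenberg :=
  hbox (α * mx B T1 + t1 * (2 * B) + B) (m * my B T2 + t2 * (2 * B)) (q * q1 B T1)
    (bxv B T1) B (q1 B T1)

def d1pSet (α β j : ℤ) : Set Heisenberg :=
  hbox (α * mx B T1 + t1 * (2 * B) + B) (β * my B T2 + t2 * (2 * B) + B)
    (j * mps B T1 T2 + t2 * pps B T1 T2) (bxv B T1) (byv B T2) (dps B T1 T2)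

def cSet (α β γ : ℤ) : Set Heisenberg :=
  hbox (α * mx B T1 + t1 * (2 * B) + B) (β * my B T2 + t2 * (2 * B) + B)
    (γ * mps B T1 T2 + t2 * pps B T1 T2 + dps B T1 T2) (bxv B T1) (byv B T2)
    (mps B T1 T2 - dps B T1 T2)

end Pieces

section ParamFacts

variable {B T1 T2 : ℤ} (hB : 1 ≤ B) (hT1 : 1 ≤ T1) (hT2 : 1 ≤ T2)

include hB hT1 in
lemma bxv_ge : 3 * B ≤ bxv B T1 := by simp only [bxv, mx]; nlinarith

include hB hT2 in
lemma byv_ge : 3 * B ≤ byv B T2 := by simp only [byv, my]; nlinarith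

include hB hT1 in
lemma q1_ge : B ^ 2 + 3 * B ^ 2 + 1 ≤ q1 B T1 := by
  have := bxv_ge hB hT1
  simp only [q1]; nlinarith

include hB hT1 hT2 in
lemma dps_ge : B ^ 2 + 9 * B ^ 2 + 1 ≤ dps B T1 T2 := by
  have h1 := bxv_ge hB hT1
  have h2 := byv_ge hB hT2
  simp only [dps]; nlinarith

include hB hT1 hT2 in
lemma mps_sub_dps : q1 B T1 + dps B T1 T2 ≤ mps B T1 T2 - dps B T1 T2 := by
  have h1 := q1_ge hB hT1
  have h2 := dps_ge hB hT1 hT2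
  simp only [mps, pps]; nlinarith

end ParamFacts

section Masters

variable [MetricSpace Heisenberg]
  (hword : ∀ x y : Heisenberg,
    dist x y = (wordLength ({aElt, bElt, cElt} : Set Heisenberg) (x⁻¹ * y) : ℝ))
  {B T1 T2 : ℤ} (hB : 1 ≤ B) (hT1 : 1 ≤ T1) (hT2 : 1 ≤ T2)

include hword hB hT1 hT2

/-- Separation of distinct bricks. -/
lemma cSet_sep (t1 t2 : ℤ) {α β γ α' β' γ' : ℤ}
    (hne : ¬(α = α' ∧ β = β' ∧ γ = γ')) {g g' : Heisenberg}
    (hg : g ∈ cSet B T1 T2 t1 t2 α β γ) (hg' : g' ∈ cSet B T1 T2 t1 t2 α' β' γ') :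
    (B : ℝ) ≤ dist g g' := by
  have hbx := bxv_ge hB hT1
  have hby := byv_ge hB hT2
  have hq1 := q1_ge hB hT1
  have hdp := dps_ge hB hT1 hT2
  have hmps := mps_sub_dps hB hT1 hT2
  simp only [cSet, hbox, Set.mem_setOf_eq] at hg hg'
  obtain ⟨⟨g1, g2⟩, ⟨g3, g4⟩, g5, g6⟩ := hg
  obtain ⟨⟨p1, p2⟩, ⟨p3, p4⟩, p5, p6⟩ := hg'
  rcases eq_or_ne α α' with rfl | hα
  · rcases eq_or_ne β β' with rfl | hβ
    · have hγ : γ ≠ γ' := fun hh => hne ⟨rfl, rfl, hh ▸ rfl⟩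
      have ebnd : ∀ z : ℤ, z * mps B T1 T2 + t2 * pps B T1 T2 + dps B T1 T2 +
          (mps B T1 T2 - dps B T1 T2) = (z + 1) * mps B T1 T2 + t2 * pps B T1 T2 := by
        intro z; ring
      have hsep := tile_sep (M := mps B T1 T2) (S := t2 * pps B T1 T2) (d := dps B T1 T2)
        (by nlinarith) hγ g5 (by linarith [ebnd γ]) p5 (by linarith [ebnd γ'])
      apply dist_of_psi hword B (bxv B T1) (byv B T2)
        (α * mx B T1 + t1 * (2 * B) + B) (by linarith)
      · exact abs_le.mpr ⟨by linarith, by linarith⟩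
      · exact abs_le.mpr ⟨by linarith, by linarith⟩
      · rw [abs_sub_comm]
        calc B ^ 2 + bxv B T1 * byv B T2 ≤ dps B T1 T2 + 1 := by simp only [dps]; linarith
          _ ≤ |(wc g - (α * mx B T1 + t1 * (2 * B) + B) * yc g) -
              (wc g' - (α * mx B T1 + t1 * (2 * B) + B) * yc g')| := hsep
    · have ebnd : ∀ z : ℤ, z * my B T2 + t2 * (2 * B) + B + byv B T2 =
          (z + 1) * my B T2 + t2 * (2 * B) := by
        intro z; simp only [byv, my]; ring
      have hsep := tile_sep (M := my B T2) (S := t2 * (2 * B)) (d := B)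
        (by simp only [my]; nlinarith) hβ g3 (by linarith [ebnd β]) p3 (by linarith [ebnd β'])
      apply dist_of_y hword
      rw [abs_sub_comm]; linarith
  · have ebnd : ∀ z : ℤ, z * mx B T1 + t1 * (2 * B) + B + bxv B T1 =
        (z + 1) * mx B T1 + t1 * (2 * B) := by
      intro z; simp only [bxv, mx]; ring
    have hsep := tile_sep (M := mx B T1) (S := t1 * (2 * B)) (d := B)
      (by simp only [mx]; nlinarith) hα g1 (by linarith [ebnd α]) p1 (by linarith [ebnd α'])
    apply dist_of_x hword
    rw [abs_sub_comm]; linarith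

/-- Separation of distinct `D0` pieces (including across translations). -/
lemma d0Set_sep {t1 t1' : ℤ} (ht1 : 1 ≤ t1) (ht1T : t1 ≤ T1)
    (ht1' : 1 ≤ t1') (ht1T' : t1' ≤ T1) {j r q j' r' q' : ℤ}
    (hr : r % 2 = r' % 2) (hq : q % 2 = q' % 2)
    (hne : ¬(j = j' ∧ t1 = t1' ∧ r = r' ∧ q = q')) {g g' : Heisenberg}
    (hg : g ∈ d0Set B T1 t1 j r q) (hg' : g' ∈ d0Set B T1 t1' j' r' q') :
    (B : ℝ) ≤ dist g g' := by
  simp only [d0Set, hbox, Set.mem_setOf_eq] at hg hg'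
  obtain ⟨⟨g1, g2⟩, ⟨g3, g4⟩, g5, g6⟩ := hg
  obtain ⟨⟨p1, p2⟩, ⟨p3, p4⟩, p5, p6⟩ := hg'
  by_cases hjt : j = j' ∧ t1 = t1'
  · obtain ⟨rfl, rfl⟩ := hjt
    rcases eq_or_ne r r' with rfl | hrr
    · have hqq : q ≠ q' := fun hh => hne ⟨rfl, rfl, rfl, hh⟩
      have hsep := blk_sep (N := qx B) hqq hq g5 g6 p5 p6
      apply dist_of_psi hword B B B (j * mx B T1 + t1 * (2 * B)) (by linarith)
      · exact abs_le.mpr ⟨by linarith, by linarith⟩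
      · exact abs_le.mpr ⟨by linarith, by linarith⟩
      · rw [abs_sub_comm]
        calc B ^ 2 + B * B ≤ qx B + 1 := by simp only [qx]; nlinarith
          _ ≤ _ := hsep
    · have hsep := blk_sep (N := B) hrr hr g3 g4 p3 p4
      apply dist_of_y hword
      rw [abs_sub_comm]; linarith
  · have hsep := wall_sep (P := 2 * B) (T := T1) (M := mx B T1) (d := B)
      (by linarith) rfl (by linarith) (by linarith)
      ht1 ht1T ht1' ht1T' hjt g1 g2 p1 p2
    apply dist_of_x hword
    rw [abs_sub_comm]; linarith

/-- Separation of distinct `D1`-y pieces (including across translations). -/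
lemma d1ySet_sep (t1 : ℤ) {t2 t2' : ℤ} (ht2 : 1 ≤ t2) (ht2T : t2 ≤ T2)
    (ht2' : 1 ≤ t2') (ht2T' : t2' ≤ T2) {α m q α' m' q' : ℤ}
    (hq : q % 2 = q' % 2)
    (hne : ¬(α = α' ∧ m = m' ∧ t2 = t2' ∧ q = q')) {g g' : Heisenberg}
    (hg : g ∈ d1ySet B T1 T2 t1 t2 α m q) (hg' : g' ∈ d1ySet B T1 T2 t1 t2' α' m' q') :
    (B : ℝ) ≤ dist g g' := by
  have hbx := bxv_ge hB hT1
  simp only [d1ySet, hbox, Set.mem_setOf_eq] at hg hg'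
  obtain ⟨⟨g1, g2⟩, ⟨g3, g4⟩, g5, g6⟩ := hg
  obtain ⟨⟨p1, p2⟩, ⟨p3, p4⟩, p5, p6⟩ := hg'
  rcases eq_or_ne α α' with rfl | hα
  · by_cases hmt : m = m' ∧ t2 = t2'
    · obtain ⟨rfl, rfl⟩ := hmt
      have hqq : q ≠ q' := fun hh => hne ⟨rfl, rfl, rfl, hh⟩
      have hsep := blk_sep (N := q1 B T1) hqq hq g5 g6 p5 p6
      apply dist_of_psi hword B (bxv B T1) B (α * mx B T1 + t1 * (2 * B) + B) (by linarith)
      · exact abs_le.mpr ⟨by linarith, by linarith⟩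
      · exact abs_le.mpr ⟨by linarith, by linarith⟩
      · rw [abs_sub_comm]
        calc B ^ 2 + bxv B T1 * B ≤ q1 B T1 + 1 := by simp only [q1]; nlinarith
          _ ≤ _ := hsep
    · have hsep := wall_sep (P := 2 * B) (T := T2) (M := my B T2) (d := B)
        (by linarith) rfl (by linarith) (by linarith)
        ht2 ht2T ht2' ht2T' hmt g3 g4 p3 p4
      apply dist_of_y hword
      rw [abs_sub_comm]; linarith
  · have ebnd : ∀ z : ℤ, z * mx B T1 + t1 * (2 * B) + B + bxv B T1 =
        (z + 1) * mx B T1 + t1 * (2 * B) := by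
      intro z; simp only [bxv, mx]; ring
    have hsep := tile_sep (M := mx B T1) (S := t1 * (2 * B)) (d := B)
      (by simp only [mx]; nlinarith) hα g1 (by linarith [ebnd α]) p1 (by linarith [ebnd α'])
    apply dist_of_x hword
    rw [abs_sub_comm]; linarith

set_option maxHeartbeats 1000000 in
/-- Separation of distinct `D1`-ψ pieces (including across translations). -/
lemma d1pSet_sep (t1 : ℤ) {t2 t2' : ℤ} (ht2 : 1 ≤ t2) (ht2T : t2 ≤ T2)
    (ht2' : 1 ≤ t2') (ht2T' : t2' ≤ T2) {α β j α' β' j' : ℤ}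
    (hne : ¬(α = α' ∧ β = β' ∧ j = j' ∧ t2 = t2')) {g g' : Heisenberg}
    (hg : g ∈ d1pSet B T1 T2 t1 t2 α β j) (hg' : g' ∈ d1pSet B T1 T2 t1 t2' α' β' j') :
    (B : ℝ) ≤ dist g g' := by
  have hbx := bxv_ge hB hT1
  have hby := byv_ge hB hT2
  have hq1 := q1_ge hB hT1
  have hdp := dps_ge hB hT1 hT2
  simp only [d1pSet, hbox, Set.mem_setOf_eq] at hg hg'
  obtain ⟨⟨g1, g2⟩, ⟨g3, g4⟩, g5, g6⟩ := hg
  obtain ⟨⟨p1, p2⟩, ⟨p3, p4⟩, p5, p6⟩ := hg'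
  rcases eq_or_ne α α' with rfl | hα
  · by_cases hjt : j = j' ∧ t2 = t2'
    · obtain ⟨rfl, rfl⟩ := hjt
      have hββ : β ≠ β' := by
        intro hh; exact hne ⟨rfl, hh, rfl, rfl⟩
      have ebnd : ∀ z : ℤ, z * my B T2 + t2 * (2 * B) + B + byv B T2 =
          (z + 1) * my B T2 + t2 * (2 * B) := by
        intro z; simp only [byv, my]; ring
      have hsep := tile_sep (M := my B T2) (S := t2 * (2 * B)) (d := B)
        (by simp only [my]; nlinarith) hββ g3 (by linarith [ebnd β]) p3 (by linarith [ebnd β'])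
      apply dist_of_y hword
      rw [abs_sub_comm]; linarith
    · rcases le_or_gt B |yc g' - yc g| with hy | hy
      · exact dist_of_y hword B hy
      · have hdps_pos : 0 < dps B T1 T2 := by nlinarith
        have hpps_pos : 0 < pps B T1 T2 := by simp only [pps]; nlinarith
        have hdps_le : dps B T1 T2 ≤ pps B T1 T2 := by simp only [pps]; nlinarith
        have hMeq : mps B T1 T2 = (T2 + 1) * pps B T1 T2 := rfl
        have hsep := wall_sep hpps_pos hMeq hdps_pos hdps_le
          ht2 ht2T ht2' ht2T' hjt g5 g6 p5 p6
        apply dist_of_psi hword B (bxv B T1) B (α * mx B T1 + t1 * (2 * B) + B) (by linarith)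
        · exact abs_le.mpr ⟨by linarith, by linarith⟩
        · linarith
        · rw [abs_sub_comm]
          calc B ^ 2 + bxv B T1 * B ≤ pps B T1 T2 - dps B T1 T2 + 1 := by
                simp only [pps, q1]; linarith
            _ ≤ _ := hsep
  · have ebnd : ∀ z : ℤ, z * mx B T1 + t1 * (2 * B) + B + bxv B T1 =
        (z + 1) * mx B T1 + t1 * (2 * B) := by
      intro z; simp only [bxv, mx]; ring
    have hsep := tile_sep (M := mx B T1) (S := t1 * (2 * B)) (d := B)
      (by simp only [mx]; nlinarith) hα g1 (by linarith [ebnd α]) p1 (by linarith [ebnd α'])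
    apply dist_of_x hword
    rw [abs_sub_comm]; linarith

end Masters

end APC
-- Part 3c: families, boundedness, nonemptiness, and the covering lemma
namespace APC

def cFam (B T1 T2 t1 t2 : ℤ) : Set (Set Heisenberg) :=
  {U | ∃ α β γ : ℤ, U = cSet B T1 T2 t1 t2 α β γ}

def d0Fam (B T1 t1 : ℤ) (s : Fin 4) : Set (Set Heisenberg) :=
  {U | ∃ j r q : ℤ, r % 2 = ((s : ℕ) : ℤ) % 2 ∧ q % 2 = ((s : ℕ) : ℤ) / 2 ∧
    U = d0Set B T1 t1 j r q}

def d1yFamSet (B T1 T2 t1 t2 : ℤ) (s : Fin 4) : Set (Set Heisenberg) :=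
  {U | ∃ α m q : ℤ, q % 2 = ((s : ℕ) : ℤ) ∧ U = d1ySet B T1 T2 t1 t2 α m q}

def d1pFamSet (B T1 T2 t1 t2 : ℤ) : Set (Set Heisenberg) :=
  {U | ∃ α β j : ℤ, U = d1pSet B T1 T2 t1 t2 α β j}

def d1Fam (B T1 T2 t1 t2 : ℤ) (s : Fin 4) : Set (Set Heisenberg) :=
  if (s : ℕ) < 2 then d1yFamSet B T1 T2 t1 t2 s else d1pFamSet B T1 T2 t1 t2

lemma d1Fam_lt {B T1 T2 t1 t2 : ℤ} {s : Fin 4} (hs : (s : ℕ) < 2) :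
    d1Fam B T1 T2 t1 t2 s = d1yFamSet B T1 T2 t1 t2 s := if_pos hs

lemma d1Fam_ge {B T1 T2 t1 t2 : ℤ} {s : Fin 4} (hs : ¬ (s : ℕ) < 2) :
    d1Fam B T1 T2 t1 t2 s = d1pFamSet B T1 T2 t1 t2 := if_neg hs

lemma rdisjoint_mono [MetricSpace Heisenberg] {r r' : ℝ} (h : r' ≤ r)
    {𝒰 : Set (Set Heisenberg)} (hr : RDisjoint r 𝒰) : RDisjoint r' 𝒰 :=
  fun U hU V hV hUV x hx y hy => le_trans h (hr U hU V hV hUV x hx y hy)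

section BddNe

variable [MetricSpace Heisenberg]
  (hword : ∀ x y : Heisenberg,
    dist x y = (wordLength ({aElt, bElt, cElt} : Set Heisenberg) (x⁻¹ * y) : ℝ))
  {B T1 T2 : ℤ} (hB : 1 ≤ B) (hT1 : 1 ≤ T1) (hT2 : 1 ≤ T2)

include hB hT1 hT2

lemma len_facts : 0 < bxv B T1 ∧ 0 < byv B T2 ∧ 0 < qx B ∧ 0 < q1 B T1 ∧
    0 < dps B T1 T2 ∧ 0 < mps B T1 T2 - dps B T1 T2 ∧ 0 < mx B T1 ∧ 0 < my B T2 ∧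
    0 < mps B T1 T2 ∧ 0 < pps B T1 T2 := by
  have h1 := bxv_ge hB hT1
  have h2 := byv_ge hB hT2
  have h3 := q1_ge hB hT1
  have h4 := dps_ge hB hT1 hT2
  have h5 := mps_sub_dps hB hT1 hT2
  have hB2 : (0:ℤ) ≤ B ^ 2 := sq_nonneg B
  refine ⟨by linarith, by linarith, by simp only [qx]; nlinarith, by linarith, by linarith,
    by linarith, by simp only [mx]; nlinarith, by simp only [my]; nlinarith, ?_, ?_⟩
  · simp only [mps, pps]; nlinarith
  · simp only [pps]; nlinarith

include hword in
lemma cFam_bounded (t1 t2 : ℤ) : UnifBounded (cFam B T1 T2 t1 t2) := by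
  obtain ⟨h1, h2, h3, h4, h5, h6, _⟩ := len_facts (B := B) (T1 := T1) (T2 := T2) hB hT1 hT2
  refine ⟨((bxv B T1 + byv B T2 + (mps B T1 T2 - dps B T1 T2) +
    bxv B T1 * byv B T2 : ℤ) : ℝ), ?_, ?_⟩
  · have : (0 : ℤ) < bxv B T1 + byv B T2 + (mps B T1 T2 - dps B T1 T2) +
        bxv B T1 * byv B T2 := by nlinarith
    exact_mod_cast this
  · rintro U ⟨α, β, γ, rfl⟩ x hx y hy
    exact hbox_bound hword (by linarith) (by linarith) hx hy

include hword in
lemma d0Fam_bounded (t1 : ℤ) (s : Fin 4) : UnifBounded (d0Fam B T1 t1 s) := by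
  obtain ⟨h1, h2, h3, h4, _⟩ := len_facts (B := B) (T1 := T1) (T2 := T2) hB hT1 hT2
  refine ⟨((B + B + qx B + B * B : ℤ) : ℝ), ?_, ?_⟩
  · have : (0 : ℤ) < B + B + qx B + B * B := by nlinarith
    exact_mod_cast this
  · rintro U ⟨j, r, q, _, _, rfl⟩ x hx y hy
    exact hbox_bound hword (by linarith) (by linarith) hx hy

include hword in
lemma d1Fam_bounded (t1 t2 : ℤ) (s : Fin 4) : UnifBounded (d1Fam B T1 T2 t1 t2 s) := by
  obtain ⟨h1, h2, h3, h4, h5, h6, _⟩ := len_facts (B := B) (T1 := T1) (T2 := T2) hB hT1 hT2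
  by_cases hs : (s : ℕ) < 2
  · rw [d1Fam_lt hs]
    refine ⟨((bxv B T1 + B + q1 B T1 + bxv B T1 * B : ℤ) : ℝ), ?_, ?_⟩
    · have : (0 : ℤ) < bxv B T1 + B + q1 B T1 + bxv B T1 * B := by nlinarith
      exact_mod_cast this
    · rintro U ⟨α, m, q, _, rfl⟩ x hx y hy
      exact hbox_bound hword (by linarith) (by linarith) hx hy
  · rw [d1Fam_ge hs]
    refine ⟨((bxv B T1 + byv B T2 + dps B T1 T2 + bxv B T1 * byv B T2 : ℤ) : ℝ), ?_, ?_⟩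
    · have : (0 : ℤ) < bxv B T1 + byv B T2 + dps B T1 T2 + bxv B T1 * byv B T2 := by
        nlinarith
      exact_mod_cast this
    · rintro U ⟨α, β, j, rfl⟩ x hx y hy
      exact hbox_bound hword (by linarith) (by linarith) hx hy

lemma d0Fam_nonempty (t1 : ℤ) (s : Fin 4) : (⋃₀ d0Fam B T1 t1 s).Nonempty := by
  obtain ⟨h1, h2, h3, h4, _⟩ := len_facts (B := B) (T1 := T1) (T2 := T2) hB hT1 hT2
  have hsval : (s : ℕ) < 4 := s.isLt
  obtain ⟨g, hg⟩ := hbox_nonempty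
    (u := 0 * mx B T1 + t1 * (2 * B)) (v := (((s : ℕ) : ℤ) % 2) * B)
    (w := (((s : ℕ) : ℤ) / 2) * qx B) (a := B) (b := B) (c := qx B)
    (by linarith) (by linarith) h3
  exact ⟨g, _, ⟨0, ((s : ℕ) : ℤ) % 2, ((s : ℕ) : ℤ) / 2, by omega, by omega, rfl⟩, hg⟩

lemma d1Fam_nonempty (t1 t2 : ℤ) (s : Fin 4) : (⋃₀ d1Fam B T1 T2 t1 t2 s).Nonempty := by
  obtain ⟨h1, h2, h3, h4, h5, _⟩ := len_facts (B := B) (T1 := T1) (T2 := T2) hB hT1 hT2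
  by_cases hs : (s : ℕ) < 2
  · rw [d1Fam_lt hs]
    obtain ⟨g, hg⟩ := hbox_nonempty
      (u := 0 * mx B T1 + t1 * (2 * B) + B) (v := 0 * my B T2 + t2 * (2 * B))
      (w := ((s : ℕ) : ℤ) * q1 B T1) (a := bxv B T1) (b := B) (c := q1 B T1)
      h1 (by linarith) h4
    exact ⟨g, _, ⟨0, 0, ((s : ℕ) : ℤ), by omega, rfl⟩, hg⟩
  · rw [d1Fam_ge hs]
    obtain ⟨g, hg⟩ := hbox_nonempty
      (u := 0 * mx B T1 + t1 * (2 * B) + B) (v := 0 * my B T2 + t2 * (2 * B) + B)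
      (w := 0 * mps B T1 T2 + t2 * pps B T1 T2) (a := bxv B T1) (b := byv B T2)
      (c := dps B T1 T2) h1 h2 h5
    exact ⟨g, _, ⟨0, 0, 0, rfl⟩, hg⟩

/-- The covering lemma: every group element lies in one of the pieces. -/
lemma cover_lemma (t1 t2 : ℤ) (g : Heisenberg) :
    (∃ s : Fin 4, ∃ U ∈ d0Fam B T1 t1 s, g ∈ U) ∨
    (∃ s : Fin 4, ∃ U ∈ d1Fam B T1 T2 t1 t2 s, g ∈ U) ∨
    (∃ U ∈ cFam B T1 T2 t1 t2, g ∈ U) := by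
  obtain ⟨h1, h2, h3, h4, h5, h6, hmx, hmy, hmps, hpps⟩ :=
    len_facts (B := B) (T1 := T1) (T2 := T2) hB hT1 hT2
  -- x-direction splitting
  have hdx := Int.mul_ediv_add_emod (xc g - t1 * (2 * B)) (mx B T1)
  set jx := (xc g - t1 * (2 * B)) / mx B T1 with hjxd
  set ex := (xc g - t1 * (2 * B)) % mx B T1 with hexd
  have hex0 : 0 ≤ ex := Int.emod_nonneg _ (ne_of_gt hmx)
  have hex1 : ex < mx B T1 := Int.emod_lt_of_pos _ hmx
  have hmc : mx B T1 * jx = jx * mx B T1 := mul_comm _ _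
  have hxeq : xc g = jx * mx B T1 + t1 * (2 * B) + ex := by linarith
  by_cases hc1 : ex < B
  · -- x-wall: D0 piece
    left
    have hdy := Int.mul_ediv_add_emod (yc g) B
    set ry := yc g / B with hryd
    set ey := yc g % B with heyd
    have hey0 : 0 ≤ ey := Int.emod_nonneg _ (by omega)
    have hey1 : ey < B := Int.emod_lt_of_pos _ (by omega)
    have hyc : B * ry = ry * B := mul_comm _ _
    set ψ := wc g - (jx * mx B T1 + t1 * (2 * B)) * yc g with hψd
    have hdq := Int.mul_ediv_add_emod ψ (qx B)
    set qy := ψ / qx B with hqyd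
    set eq2 := ψ % qx B with heq2d
    have heq0 : 0 ≤ eq2 := Int.emod_nonneg _ (ne_of_gt h3)
    have heq1 : eq2 < qx B := Int.emod_lt_of_pos _ h3
    have hqc : qx B * qy = qy * qx B := mul_comm _ _
    refine ⟨⟨(ry % 2 + 2 * (qy % 2)).toNat, by omega⟩, d0Set B T1 t1 jx ry qy,
      ⟨jx, ry, qy, ?_, ?_, rfl⟩, ?_⟩
    · show ry % 2 = (((ry % 2 + 2 * (qy % 2)).toNat : ℕ) : ℤ) % 2
      rw [Int.toNat_of_nonneg (by omega)]; omega
    · show qy % 2 = (((ry % 2 + 2 * (qy % 2)).toNat : ℕ) : ℤ) / 2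
      rw [Int.toNat_of_nonneg (by omega)]; omega
    · show _ ∧ _ ∧ _
      refine ⟨⟨by linarith, by linarith⟩, ⟨by linarith, by linarith⟩,
        by linarith, by linarith⟩
  · -- x-tile
    have hdy := Int.mul_ediv_add_emod (yc g - t2 * (2 * B)) (my B T2)
    set jy := (yc g - t2 * (2 * B)) / my B T2 with hjyd
    set ey := (yc g - t2 * (2 * B)) % my B T2 with heyd
    have hey0 : 0 ≤ ey := Int.emod_nonneg _ (ne_of_gt hmy)
    have hey1 : ey < my B T2 := Int.emod_lt_of_pos _ hmy
    have hyc : my B T2 * jy = jy * my B T2 := mul_comm _ _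
    have hyeq : yc g = jy * my B T2 + t2 * (2 * B) + ey := by linarith
    have hbxe : jx * mx B T1 + t1 * (2 * B) + B + bxv B T1 =
        (jx + 1) * mx B T1 + t1 * (2 * B) := by simp only [bxv, mx]; ring
    by_cases hc2 : ey < B
    · -- y-wall: D1y piece
      right; left
      set ψ := wc g - (jx * mx B T1 + t1 * (2 * B) + B) * yc g with hψd
      have hdq := Int.mul_ediv_add_emod ψ (q1 B T1)
      set qy := ψ / q1 B T1 with hqyd
      set eq2 := ψ % q1 B T1 with heq2d
      have heq0 : 0 ≤ eq2 := Int.emod_nonneg _ (ne_of_gt h4)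
      have heq1 : eq2 < q1 B T1 := Int.emod_lt_of_pos _ h4
      have hqc : q1 B T1 * qy = qy * q1 B T1 := mul_comm _ _
      refine ⟨⟨(qy % 2).toNat, by omega⟩, ?_⟩
      rw [d1Fam_lt (by show (qy % 2).toNat < 2; omega)]
      refine ⟨d1ySet B T1 T2 t1 t2 jx jy qy, ⟨jx, jy, qy, ?_, rfl⟩, ?_⟩
      · show qy % 2 = (((qy % 2).toNat : ℕ) : ℤ)
        rw [Int.toNat_of_nonneg (by omega)]
      · show _ ∧ _ ∧ _
        refine ⟨⟨by linarith, by linarith⟩, ⟨by linarith, by linarith⟩,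
          by linarith, by linarith⟩
    · -- y-tile
      set ψ := wc g - (jx * mx B T1 + t1 * (2 * B) + B) * yc g with hψd
      have hdp := Int.mul_ediv_add_emod (ψ - t2 * pps B T1 T2) (mps B T1 T2)
      set jp := (ψ - t2 * pps B T1 T2) / mps B T1 T2 with hjpd
      set ep := (ψ - t2 * pps B T1 T2) % mps B T1 T2 with hepd
      have hep0 : 0 ≤ ep := Int.emod_nonneg _ (ne_of_gt hmps)
      have hep1 : ep < mps B T1 T2 := Int.emod_lt_of_pos _ hmps
      have hpc : mps B T1 T2 * jp = jp * mps B T1 T2 := mul_comm _ _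
      have hψeq : ψ = jp * mps B T1 T2 + t2 * pps B T1 T2 + ep := by linarith
      have hbye : jy * my B T2 + t2 * (2 * B) + B + byv B T2 =
          (jy + 1) * my B T2 + t2 * (2 * B) := by simp only [byv, my]; ring
      by_cases hc3 : ep < dps B T1 T2
      · -- ψ-wall: D1ψ piece
        right; left
        refine ⟨⟨2, by norm_num⟩, ?_⟩
        rw [d1Fam_ge (by norm_num)]
        refine ⟨d1pSet B T1 T2 t1 t2 jx jy jp, ⟨jx, jy, jp, rfl⟩, ?_⟩
        show _ ∧ _ ∧ _
        refine ⟨⟨by linarith, by linarith⟩, ⟨by linarith, by linarith⟩,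
          by linarith, by linarith⟩
      · -- brick
        right; right
        refine ⟨cSet B T1 T2 t1 t2 jx jy jp, ⟨jx, jy, jp, rfl⟩, ?_⟩
        show _ ∧ _ ∧ _
        refine ⟨⟨by linarith, by linarith⟩, ⟨by linarith, by linarith⟩,
          by linarith, by linarith⟩

end BddNe

end APC


open APC Set

/-- The integer Heisenberg group `H₃(ℤ)` (3×3 upper unitriangular integer
matrices), with the word metric of the generating set `{a, b, c}`, has the `(2,0)`-DTUT
property. -/
theorem heisenberg_dtut [MetricSpace APC.Heisenberg]
    (hword : ∀ x y : APC.Heisenberg,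
      dist x y = (wordLength ({APC.aElt, APC.bElt, APC.cElt} : Set APC.Heisenberg)
        (x⁻¹ * y) : ℝ)) :
    DTUT APC.Heisenberg 2 0 := by
  classical
  refine ⟨fun _ => 3, ?_⟩
  intro h k hk
  set B : ℤ := ((k 2 : ℕ) : ℤ) with hBdef
  set T1 : ℤ := ((h (k 1) : ℕ) : ℤ) with hT1def
  set T2 : ℤ := ((h (k 2) : ℕ) : ℤ) with hT2def
  have hB : 1 ≤ B := by rw [hBdef]; exact_mod_cast (k 2).one_le
  have hT1 : 1 ≤ T1 := by rw [hT1def]; exact_mod_cast (h (k 1)).one_le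
  have hT2 : 1 ≤ T2 := by rw [hT2def]; exact_mod_cast (h (k 2)).one_le
  have hB1R : (1 : ℝ) ≤ (B : ℝ) := by exact_mod_cast hB
  have hK0le : ((k 0 : ℕ) : ℝ) ≤ (B : ℝ) := by
    rw [hBdef]
    have h1 : k 0 ≤ k 2 := le_of_lt (hk (by decide))
    exact_mod_cast h1
  have hKile : ∀ j : Fin 3, ((k j : ℕ) : ℝ) ≤ (B : ℝ) := by
    intro j
    rw [hBdef]
    have h1 : k j ≤ k (Fin.last 2) := hk.monotone (Fin.le_last j)
    have h2 : Fin.last 2 = (2 : Fin 3) := rfl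
    rw [h2] at h1
    exact_mod_cast h1
  refine ⟨fun l _ => cFam B T1 T2 ((l 0 : ℕ) : ℤ) ((l 1 : ℕ) : ℤ),
    fun l i s => if (i : ℕ) = 0 then d0Fam B T1 ((l 0 : ℕ) : ℤ) s
      else d1Fam B T1 T2 ((l 0 : ℕ) : ℤ) ((l 1 : ℕ) : ℤ) s, ?_⟩
  intro l hl
  have hc0 : ((0 : Fin 2) : ℕ) = 0 := rfl
  have hc1 : ¬ ((1 : Fin 2) : ℕ) = 0 := by decide
  have hsucc0 : (0 : Fin 2).succ = (1 : Fin 3) := rfl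
  have hsucc1 : (1 : Fin 2).succ = (2 : Fin 3) := rfl
  have ht1a : 1 ≤ ((l 0 : ℕ) : ℤ) := by exact_mod_cast (l 0).one_le
  have ht2a : 1 ≤ ((l 1 : ℕ) : ℤ) := by exact_mod_cast (l 1).one_le
  have ht1b : ((l 0 : ℕ) : ℤ) ≤ T1 := by
    rw [hT1def]
    have h1 := hl 0
    rw [hsucc0] at h1
    exact_mod_cast h1
  have ht2b : ((l 1 : ℕ) : ℤ) ≤ T2 := by
    rw [hT2def]
    have h1 := hl 1
    rw [hsucc1] at h1
    exact_mod_cast h1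
  constructor
  · refine ⟨?_, ?_, ?_, ?_, ?_⟩
    · intro j
      exact cFam_bounded hword hB hT1 hT2 _ _
    · intro i s
      beta_reduce
      by_cases hi : (i : ℕ) = 0
      · rw [if_pos hi]
        exact d0Fam_bounded hword hB hT1 hT2 _ s
      · rw [if_neg hi]
        exact d1Fam_bounded hword hB hT1 hT2 _ _ s
    · intro j U hU V hV hUV x hx y hy
      obtain ⟨α, β, γ, rfl⟩ := hU
      obtain ⟨α', β', γ', rfl⟩ := hV
      refine le_trans hK0le (cSet_sep hword hB hT1 hT2 _ _ ?_ hx hy)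
      rintro ⟨rfl, rfl, rfl⟩
      exact hUV rfl
    · intro i s
      beta_reduce
      by_cases hi : (i : ℕ) = 0
      · rw [if_pos hi]
        intro U hU V hV hUV x hx y hy
        obtain ⟨j, r, q, hr, hq, rfl⟩ := hU
        obtain ⟨j', r', q', hr', hq', rfl⟩ := hV
        refine le_trans (hKile i.succ) (d0Set_sep hword hB hT1 hT2 ht1a ht1b ht1a ht1b
          (hr.trans hr'.symm) (hq.trans hq'.symm) ?_ hx hy)
        rintro ⟨rfl, -, rfl, rfl⟩
        exact hUV rfl
      · rw [if_neg hi]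
        by_cases hs : (s : ℕ) < 2
        · rw [d1Fam_lt hs]
          intro U hU V hV hUV x hx y hy
          obtain ⟨α, m, q, hq, rfl⟩ := hU
          obtain ⟨α', m', q', hq', rfl⟩ := hV
          refine le_trans (hKile i.succ) (d1ySet_sep hword hB hT1 hT2 _ ht2a ht2b ht2a ht2b
            (hq.trans hq'.symm) ?_ hx hy)
          rintro ⟨rfl, rfl, -, rfl⟩
          exact hUV rfl
        · rw [d1Fam_ge hs]
          intro U hU V hV hUV x hx y hy
          obtain ⟨α, β, j, rfl⟩ := hU
          obtain ⟨α', β', j', rfl⟩ := hV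
          refine le_trans (hKile i.succ) (d1pSet_sep hword hB hT1 hT2 _ ht2a ht2b ht2a ht2b
            ?_ hx hy)
          rintro ⟨rfl, rfl, rfl, -⟩
          exact hUV rfl
    · apply Set.eq_univ_of_forall
      intro g
      rcases cover_lemma hB hT1 hT2 ((l 0 : ℕ) : ℤ) ((l 1 : ℕ) : ℤ) g with
        ⟨s, U, hU, hg⟩ | ⟨s, U, hU, hg⟩ | ⟨U, hU, hg⟩
      · refine Set.mem_union_right _ (Set.mem_iUnion.mpr ⟨0, Set.mem_iUnion.mpr ⟨s, ?_⟩⟩)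
        beta_reduce
        refine ⟨U, ?_, hg⟩
        rw [if_pos hc0]
        exact hU
      · refine Set.mem_union_right _ (Set.mem_iUnion.mpr ⟨1, Set.mem_iUnion.mpr ⟨s, ?_⟩⟩)
        beta_reduce
        refine ⟨U, ?_, hg⟩
        rw [if_neg hc1]
        exact hU
      · refine Set.mem_union_left _ (Set.mem_iUnion.mpr ⟨0, ?_⟩)
        beta_reduce
        exact ⟨U, hU, hg⟩
  · intro i s
    by_cases hi : (i : ℕ) = 0
    · have hieq : i = 0 := Fin.ext (by simpa using hi)
      subst hieq
      refine ⟨?_, ?_, ?_⟩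
      · intro t ht
        beta_reduce
        rw [if_pos hc0, Function.update_self]
        exact d0Fam_nonempty hB hT1 hT2 _ s
      · intro t t' ht ht' htt'
        beta_reduce
        rw [if_pos hc0, if_pos hc0, Function.update_self, Function.update_self]
        rw [Set.disjoint_left]
        rintro a ⟨U, hU, haU⟩ ⟨V, hV, haV⟩
        obtain ⟨j, r, q, hr, hq, rfl⟩ := hU
        obtain ⟨j', r', q', hr', hq', rfl⟩ := hV
        rw [hsucc0] at ht ht'
        have hta : 1 ≤ ((t : ℕ) : ℤ) := by exact_mod_cast t.one_le
        have htb : ((t : ℕ) : ℤ) ≤ T1 := by rw [hT1def]; exact_mod_cast ht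
        have hta' : 1 ≤ ((t' : ℕ) : ℤ) := by exact_mod_cast t'.one_le
        have htb' : ((t' : ℕ) : ℤ) ≤ T1 := by rw [hT1def]; exact_mod_cast ht'
        have hsep := d0Set_sep hword hB hT1 hT2 hta htb hta' htb'
          (hr.trans hr'.symm) (hq.trans hq'.symm) ?_ haU haV
        · rw [dist_self] at hsep
          linarith
        · rintro ⟨-, heq, -, -⟩
          exact htt' (by exact_mod_cast heq)
      · intro U hU V hV hUV x hx y hy
        simp only [Set.mem_iUnion, Set.mem_setOf_eq] at hU hV
        obtain ⟨t, ht, hU⟩ := hU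
        obtain ⟨t', ht', hV⟩ := hV
        beta_reduce at hU hV
        rw [if_pos hc0, Function.update_self] at hU hV
        obtain ⟨j, r, q, hr, hq, rfl⟩ := hU
        obtain ⟨j', r', q', hr', hq', rfl⟩ := hV
        rw [hsucc0] at ht ht'
        have hta : 1 ≤ ((t : ℕ) : ℤ) := by exact_mod_cast t.one_le
        have htb : ((t : ℕ) : ℤ) ≤ T1 := by rw [hT1def]; exact_mod_cast ht
        have hta' : 1 ≤ ((t' : ℕ) : ℤ) := by exact_mod_cast t'.one_le
        have htb' : ((t' : ℕ) : ℤ) ≤ T1 := by rw [hT1def]; exact_mod_cast ht'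
        refine le_trans (hKile _) (d0Set_sep hword hB hT1 hT2 hta htb hta' htb'
          (hr.trans hr'.symm) (hq.trans hq'.symm) ?_ hx hy)
        rintro ⟨rfl, heq, rfl, rfl⟩
        exact hUV (by rw [heq])
    · have hi1 : (i : ℕ) = 1 := by have := i.isLt; omega
      have hieq : i = 1 := Fin.ext (by simpa using hi1)
      subst hieq
      have hup0 : ∀ t : ℕ+, Function.update l 1 t 0 = l 0 := fun t =>
        Function.update_of_ne (by decide) _ _
      refine ⟨?_, ?_, ?_⟩
      · intro t ht
        beta_reduce
        rw [if_neg hc1, hup0 t, Function.update_self]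
        exact d1Fam_nonempty hB hT1 hT2 _ _ s
      · intro t t' ht ht' htt'
        beta_reduce
        rw [if_neg hc1, if_neg hc1, hup0 t, hup0 t',
          Function.update_self, Function.update_self]
        rw [hsucc1] at ht ht'
        have hta : 1 ≤ ((t : ℕ) : ℤ) := by exact_mod_cast t.one_le
        have htb : ((t : ℕ) : ℤ) ≤ T2 := by rw [hT2def]; exact_mod_cast ht
        have hta' : 1 ≤ ((t' : ℕ) : ℤ) := by exact_mod_cast t'.one_le
        have htb' : ((t' : ℕ) : ℤ) ≤ T2 := by rw [hT2def]; exact_mod_cast ht'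
        rw [Set.disjoint_left]
        rintro a ⟨U, hU, haU⟩ ⟨V, hV, haV⟩
        by_cases hs : (s : ℕ) < 2
        · rw [d1Fam_lt hs] at hU hV
          obtain ⟨α, m, q, hq, rfl⟩ := hU
          obtain ⟨α', m', q', hq', rfl⟩ := hV
          have hsep := d1ySet_sep hword hB hT1 hT2 _ hta htb hta' htb'
            (hq.trans hq'.symm) ?_ haU haV
          · rw [dist_self] at hsep
            linarith
          · rintro ⟨-, -, heq, -⟩
            exact htt' (by exact_mod_cast heq)
        · rw [d1Fam_ge hs] at hU hV
          obtain ⟨α, β, j, rfl⟩ := hU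
          obtain ⟨α', β', j', rfl⟩ := hV
          have hsep := d1pSet_sep hword hB hT1 hT2 _ hta htb hta' htb' ?_ haU haV
          · rw [dist_self] at hsep
            linarith
          · rintro ⟨-, -, -, heq⟩
            exact htt' (by exact_mod_cast heq)
      · intro U hU V hV hUV x hx y hy
        simp only [Set.mem_iUnion, Set.mem_setOf_eq] at hU hV
        obtain ⟨t, ht, hU⟩ := hU
        obtain ⟨t', ht', hV⟩ := hV
        beta_reduce at hU hV
        rw [if_neg hc1, hup0 t, Function.update_self] at hU
        rw [if_neg hc1, hup0 t', Function.update_self] at hV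
        rw [hsucc1] at ht ht'
        have hta : 1 ≤ ((t : ℕ) : ℤ) := by exact_mod_cast t.one_le
        have htb : ((t : ℕ) : ℤ) ≤ T2 := by rw [hT2def]; exact_mod_cast ht
        have hta' : 1 ≤ ((t' : ℕ) : ℤ) := by exact_mod_cast t'.one_le
        have htb' : ((t' : ℕ) : ℤ) ≤ T2 := by rw [hT2def]; exact_mod_cast ht'
        by_cases hs : (s : ℕ) < 2
        · rw [d1Fam_lt hs] at hU hV
          obtain ⟨α, m, q, hq, rfl⟩ := hU
          obtain ⟨α', m', q', hq', rfl⟩ := hV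
          refine le_trans (hKile _) (d1ySet_sep hword hB hT1 hT2 _ hta htb hta' htb'
            (hq.trans hq'.symm) ?_ hx hy)
          rintro ⟨rfl, rfl, heq, rfl⟩
          exact hUV (by rw [heq])
        · rw [d1Fam_ge hs] at hU hV
          obtain ⟨α, β, j, rfl⟩ := hU
          obtain ⟨α', β', j', rfl⟩ := hV
          refine le_trans (hKile _) (d1pSet_sep hword hB hT1 hT2 _ hta htb hta' htb'
            ?_ hx hy)
          rintro ⟨rfl, rfl, rfl, heq⟩
          exact hUV (by rw [heq])
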